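/- arXiv:2407.07846 — 2 statements merged into one kernel-verified Lean document; each statement's English description precedes it below -/
import Mathlib

section
/- Let P and Q be Pauli operators with P² = Q² = I, and angles θ₁, θ₂ with θ₁ ≢ 0 (mod 2π) and θ₂ ≢ 0 (mod 2π). Then R_P(θ₁) and R_Q(θ₂) commute up to a global phase if and only if P commutes with Q, or (θ₁ ≡ π (mod 2π) and θ₂ ≡ π (mod 2π)). -/
open Matrix Finset

noncomputable def pauliMat : Fin 4 → Matrix (Fin 2) (Fin 2) ℂ
  | 0 => 1
  | 1 => !![0, 1; 1, 0]
  | 2 => !![0, -Complex.I; Complex.I, 0]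
  | 3 => !![1, 0; 0, -1]

noncomputable def pauliTensor {n : ℕ} (f : Fin n → Fin 4) :
    Matrix (Fin n → Fin 2) (Fin n → Fin 2) ℂ :=
  fun i j => ∏ k, pauliMat (f k) (i k) (j k)

def IsPauliOp {n : ℕ} (P : Matrix (Fin n → Fin 2) (Fin n → Fin 2) ℂ) : Prop :=
  ∃ (s : ℂ) (f : Fin n → Fin 4), (s = 1 ∨ s = -1) ∧ P = s • pauliTensor f

noncomputable def pauliRot {n : ℕ} (P : Matrix (Fin n → Fin 2) (Fin n → Fin 2) ℂ) (θ : ℝ) :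
    Matrix (Fin n → Fin 2) (Fin n → Fin 2) ℂ :=
  NormedSpace.exp ((-(θ / 2 : ℂ) * Complex.I) • P)

section ExpLemma

variable {N : Type*} [Fintype N] [DecidableEq N]

/-- Exponential of a scalar multiple of an involution. -/
lemma exp_smul_involution (M : Matrix N N ℂ) (h : M * M = 1) (z : ℂ) :
    NormedSpace.exp (z • M) = Complex.cosh z • (1 : Matrix N N ℂ) + Complex.sinh z • M := by
  letI : SeminormedRing (Matrix N N ℂ) := Matrix.linftyOpSemiNormedRing
  letI : NormedRing (Matrix N N ℂ) := Matrix.linftyOpNormedRing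
  letI : NormedAlgebra ℂ (Matrix N N ℂ) := Matrix.linftyOpNormedAlgebra
  have hmul : ∀ u v u' v' : ℂ,
      (u • (1 : Matrix N N ℂ) + v • M) * (u' • 1 + v' • M)
        = (u * u' + v * v') • 1 + (u * v' + v * u') • M := by
    intro u v u' v'
    simp only [add_mul, mul_add, smul_mul_smul_comm, one_mul, mul_one, h]
    module
  let φ : ℂ × ℂ →ₐ[ℂ] Matrix N N ℂ :=
  { toFun := fun p => (2⁻¹ * (p.1 + p.2)) • 1 + (2⁻¹ * (p.1 - p.2)) • M
    map_one' := by
      show (2⁻¹ * ((1:ℂ) + 1)) • (1 : Matrix N N ℂ) + (2⁻¹ * ((1:ℂ) - 1)) • M = 1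
      norm_num
    map_mul' := by
      intro p q
      show (2⁻¹ * (p.1 * q.1 + p.2 * q.2)) • (1 : Matrix N N ℂ)
            + (2⁻¹ * (p.1 * q.1 - p.2 * q.2)) • M = _
      rw [hmul]
      module
    map_zero' := by
      show (2⁻¹ * ((0:ℂ) + 0)) • (1 : Matrix N N ℂ) + (2⁻¹ * ((0:ℂ) - 0)) • M = 0
      norm_num
    map_add' := by
      intro p q
      show (2⁻¹ * (p.1 + q.1 + (p.2 + q.2))) • (1 : Matrix N N ℂ)
            + (2⁻¹ * (p.1 + q.1 - (p.2 + q.2))) • M = _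
      module
    commutes' := by
      intro c
      show (2⁻¹ * (c + c)) • (1 : Matrix N N ℂ) + (2⁻¹ * (c - c)) • M = algebraMap ℂ _ c
      rw [Algebra.algebraMap_eq_smul_one]
      module }
  have hφ : Continuous φ := by
    show Continuous fun p : ℂ × ℂ => (2⁻¹ * (p.1 + p.2)) • (1 : Matrix N N ℂ)
      + (2⁻¹ * (p.1 - p.2)) • M
    fun_prop
  have h1 : φ (z, -z) = z • M := by
    show (2⁻¹ * (z + -z)) • (1 : Matrix N N ℂ) + (2⁻¹ * (z - -z)) • M = z • M
    module
  have h2 : NormedSpace.exp ((z, -z) : ℂ × ℂ) = (Complex.exp z, Complex.exp (-z)) := by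
    ext
    · rw [Prod.fst_exp, ← Complex.exp_eq_exp_ℂ]
    · rw [Prod.snd_exp, ← Complex.exp_eq_exp_ℂ]
  have h3 := NormedSpace.map_exp φ hφ ((z, -z) : ℂ × ℂ)
  rw [h1] at h3
  refine h3.symm.trans ?_
  rw [h2]
  show (2⁻¹ * (Complex.exp z + Complex.exp (-z))) • (1 : Matrix N N ℂ)
      + (2⁻¹ * (Complex.exp z - Complex.exp (-z))) • M = _
  rw [Complex.cosh, Complex.sinh]
  module

lemma mulExpand (M M' : Matrix N N ℂ) (u v u' v' : ℂ) :
    (u • (1 : Matrix N N ℂ) + v • M) * (u' • 1 + v' • M')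
      = (u * u') • 1 + (u * v') • M' + (v * u') • M + (v * v') • (M * M') := by
  simp only [add_mul, mul_add, smul_mul_smul_comm, one_mul, mul_one]
  abel

end ExpLemma

lemma pauliRot_eq {n : ℕ} (P : Matrix (Fin n → Fin 2) (Fin n → Fin 2) ℂ)
    (h : P * P = 1) (θ : ℝ) :
    pauliRot P θ = Complex.cos ((θ : ℂ) / 2) • 1
      + (-Complex.sin ((θ : ℂ) / 2) * Complex.I) • P := by
  unfold pauliRot
  rw [exp_smul_involution P h, Complex.cosh_mul_I, Complex.sinh_mul_I, Complex.cos_neg,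
    Complex.sin_neg]

noncomputable def pSign (a b : Fin 4) : ℂ :=
  if a = 0 ∨ b = 0 ∨ a = b then 1 else -1

lemma pSign_cases (a b : Fin 4) : pSign a b = 1 ∨ pSign a b = -1 := by
  unfold pSign; split <;> simp

lemma pauliMat_comm (a b : Fin 4) :
    pauliMat a * pauliMat b = pSign a b • (pauliMat b * pauliMat a) := by
  fin_cases a <;> fin_cases b <;>
    refine Matrix.ext fun i j => ?_ <;>
    fin_cases i <;> fin_cases j <;>
    norm_num [pauliMat, pSign, Matrix.mul_apply, Fin.sum_univ_two, Complex.ext_iff]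

lemma pauliTensor_mul_apply {n : ℕ} (f g : Fin n → Fin 4) (i j : Fin n → Fin 2) :
    (pauliTensor f * pauliTensor g) i j
      = ∏ k, (pauliMat (f k) * pauliMat (g k)) (i k) (j k) := by
  simp only [Matrix.mul_apply, pauliTensor]
  simp_rw [← Finset.prod_mul_distrib]
  rw [Fintype.prod_sum]

lemma pauliTensor_comm {n : ℕ} (f g : Fin n → Fin 4) :
    pauliTensor f * pauliTensor g
      = (∏ k, pSign (f k) (g k)) • (pauliTensor g * pauliTensor f) := by
  ext i j
  rw [Matrix.smul_apply, pauliTensor_mul_apply, pauliTensor_mul_apply, smul_eq_mul,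
    ← Finset.prod_mul_distrib]
  refine Finset.prod_congr rfl fun k _ => ?_
  rw [pauliMat_comm (f k) (g k), Matrix.smul_apply, smul_eq_mul]

lemma isPauliOp_comm {n : ℕ} {P Q : Matrix (Fin n → Fin 2) (Fin n → Fin 2) ℂ}
    (hP : IsPauliOp P) (hQ : IsPauliOp Q) :
    ∃ d : ℂ, (d = 1 ∨ d = -1) ∧ P * Q = d • (Q * P) := by
  obtain ⟨s, f, _, rfl⟩ := hP
  obtain ⟨t, g, _, rfl⟩ := hQ
  refine ⟨∏ k, pSign (f k) (g k), ?_, ?_⟩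
  · refine Finset.prod_induction _ (fun x => x = 1 ∨ x = -1) ?_ (Or.inl rfl)
      (fun k _ => pSign_cases (f k) (g k))
    rintro x y (rfl | rfl) (rfl | rfl) <;> norm_num
  · rw [smul_mul_smul_comm, smul_mul_smul_comm, pauliTensor_comm f g, smul_comm,
      smul_smul, smul_smul, mul_comm s t]

theorem stmt7 {n : ℕ} (P Q : Matrix (Fin n → Fin 2) (Fin n → Fin 2) ℂ)
    (hP : IsPauliOp P) (hQ : IsPauliOp Q) (hP2 : P * P = 1) (hQ2 : Q * Q = 1)
    (θ₁ θ₂ : ℝ) (hθ₁ : ¬ ∃ k : ℤ, θ₁ = 2 * Real.pi * k) (hθ₂ : ¬ ∃ k : ℤ, θ₂ = 2 * Real.pi * k) :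
    (∃ c : ℂ, ‖c‖ = 1 ∧
        pauliRot P θ₁ * pauliRot Q θ₂ = c • (pauliRot Q θ₂ * pauliRot P θ₁)) ↔
      (P * Q = Q * P ∨
        ((∃ k : ℤ, θ₁ = Real.pi + 2 * Real.pi * k) ∧ (∃ k : ℤ, θ₂ = Real.pi + 2 * Real.pi * k))) := by
  set u₁ : ℂ := Complex.cos ((θ₁ : ℂ) / 2) with hu₁def
  set u₂ : ℂ := Complex.cos ((θ₂ : ℂ) / 2) with hu₂def
  set w₁ : ℂ := -Complex.sin ((θ₁ : ℂ) / 2) * Complex.I with hw₁def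
  set w₂ : ℂ := -Complex.sin ((θ₂ : ℂ) / 2) * Complex.I with hw₂def
  obtain ⟨d, hd1, hdPQ⟩ := isPauliOp_comm hP hQ
  -- basic nonvanishing facts
  have hsin₁ : Real.sin (θ₁ / 2) ≠ 0 := by
    intro h
    obtain ⟨k, hk⟩ := Real.sin_eq_zero_iff.mp h
    exact hθ₁ ⟨k, by linear_combination (-2 : ℝ) * hk⟩
  have hsin₂ : Real.sin (θ₂ / 2) ≠ 0 := by
    intro h
    obtain ⟨k, hk⟩ := Real.sin_eq_zero_iff.mp h
    exact hθ₂ ⟨k, by linear_combination (-2 : ℝ) * hk⟩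
  have hcast : ∀ θ : ℝ, ((θ : ℂ) / 2) = ((θ / 2 : ℝ) : ℂ) := by intro θ; push_cast; ring
  have hw₁ : w₁ ≠ 0 := by
    rw [hw₁def]
    refine mul_ne_zero (neg_ne_zero.mpr ?_) Complex.I_ne_zero
    rw [hcast, ← Complex.ofReal_sin]
    exact_mod_cast hsin₁
  have hw₂ : w₂ ≠ 0 := by
    rw [hw₂def]
    refine mul_ne_zero (neg_ne_zero.mpr ?_) Complex.I_ne_zero
    rw [hcast, ← Complex.ofReal_sin]
    exact_mod_cast hsin₂
  have hT : Matrix.trace (1 : Matrix (Fin n → Fin 2) (Fin n → Fin 2) ℂ) ≠ 0 := by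
    rw [Matrix.trace_one]
    simp only [Fintype.card_fun, Fintype.card_fin]
    exact_mod_cast pow_ne_zero n (two_ne_zero)
  -- rotation expansion
  have hAB : pauliRot P θ₁ * pauliRot Q θ₂
      = (u₁ * u₂) • (1 : Matrix (Fin n → Fin 2) (Fin n → Fin 2) ℂ) + (u₁ * w₂) • Q + (w₁ * u₂) • P + (w₁ * w₂) • (P * Q) := by
    rw [pauliRot_eq P hP2, pauliRot_eq Q hQ2, mulExpand]
  have hBA : pauliRot Q θ₂ * pauliRot P θ₁
      = (u₂ * u₁) • (1 : Matrix (Fin n → Fin 2) (Fin n → Fin 2) ℂ) + (u₂ * w₁) • P + (w₂ * u₁) • Q + (w₂ * w₁) • (Q * P) := by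
    rw [pauliRot_eq P hP2, pauliRot_eq Q hQ2, mulExpand]
  constructor
  · rintro ⟨c, _, hcomm⟩
    rcases hd1 with rfl | rfl
    · left; rw [hdPQ, one_smul]
    right
    have hPQ : P * Q = -(Q * P) := by rw [hdPQ, neg_one_smul]
    -- trace facts
    have tP : Matrix.trace P = 0 := by
      have h1 : Matrix.trace (Q * (P * Q)) = Matrix.trace P := by
        rw [Matrix.trace_mul_comm, mul_assoc, hQ2, mul_one]
      have h2 : Matrix.trace (Q * (P * Q)) = -Matrix.trace P := by
        rw [hPQ, mul_neg, Matrix.trace_neg, ← mul_assoc, hQ2, one_mul]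
      linear_combination (h2 - h1) / 2
    have tQ : Matrix.trace Q = 0 := by
      have h1 : Matrix.trace (P * (Q * P)) = Matrix.trace Q := by
        rw [Matrix.trace_mul_comm, mul_assoc, hP2, mul_one]
      have hQP : Q * P = -(P * Q) := by rw [hPQ, neg_neg]
      have h2 : Matrix.trace (P * (Q * P)) = -Matrix.trace Q := by
        rw [hQP, mul_neg, Matrix.trace_neg, ← mul_assoc, hP2, one_mul]
      linear_combination (h2 - h1) / 2
    have tPQ : Matrix.trace (P * Q) = 0 := by
      have h1 : Matrix.trace (P * Q) = Matrix.trace (Q * P) := Matrix.trace_mul_comm P Q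
      have h2 : Matrix.trace (P * Q) = -Matrix.trace (Q * P) := by
        rw [hPQ, Matrix.trace_neg]
      linear_combination (h1 + h2) / 2
    have tQP : Matrix.trace (Q * P) = 0 := by
      rw [Matrix.trace_mul_comm Q P]; exact tPQ
    -- composite trace facts
    have tPP : Matrix.trace (P * P) = Matrix.trace (1 : Matrix (Fin n → Fin 2) (Fin n → Fin 2) ℂ) := by rw [hP2]
    have tQQ : Matrix.trace (Q * Q) = Matrix.trace (1 : Matrix (Fin n → Fin 2) (Fin n → Fin 2) ℂ) := by rw [hQ2]
    have tPQP : Matrix.trace ((P * Q) * P) = 0 := by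
      rw [Matrix.trace_mul_comm, ← mul_assoc, hP2, one_mul]; exact tQ
    have tQPP : Matrix.trace ((Q * P) * P) = 0 := by
      rw [mul_assoc, hP2, mul_one]; exact tQ
    have tPQQ : Matrix.trace ((P * Q) * Q) = 0 := by
      rw [mul_assoc, hQ2, mul_one]; exact tP
    have tQPQ : Matrix.trace ((Q * P) * Q) = 0 := by
      rw [Matrix.trace_mul_comm, ← mul_assoc, hQ2, one_mul]; exact tP
    have tQQP : Matrix.trace (Q * (Q * P)) = 0 := by
      rw [← mul_assoc, hQ2, one_mul]; exact tP
    have tPQP' : Matrix.trace (P * (Q * P)) = 0 := by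
      rw [Matrix.trace_mul_comm, mul_assoc, hP2, mul_one]; exact tQ
    have hone : (P * Q) * (Q * P) = 1 := by
      rw [mul_assoc, ← mul_assoc Q Q P, hQ2, one_mul, hP2]
    have hnegone : (Q * P) * (Q * P) = -1 := by
      calc (Q * P) * (Q * P) = Q * ((P * Q) * P) := by rw [mul_assoc, mul_assoc]
        _ = Q * (-(Q * P) * P) := by rw [hPQ]
        _ = -(Q * (Q * (P * P))) := by rw [neg_mul, mul_neg, mul_assoc]
        _ = -1 := by rw [hP2, mul_one, hQ2]
    -- expansion of traces
    have texp : ∀ (α β γ δ : ℂ) (A B C X : Matrix (Fin n → Fin 2) (Fin n → Fin 2) ℂ),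
        Matrix.trace ((α • (1 : Matrix (Fin n → Fin 2) (Fin n → Fin 2) ℂ) + β • A + γ • B + δ • C) * X)
          = α * Matrix.trace X + β * Matrix.trace (A * X) + γ * Matrix.trace (B * X)
            + δ * Matrix.trace (C * X) := by
      intro α β γ δ A B C X
      simp [Matrix.add_mul, Matrix.smul_mul, Matrix.trace_add, Matrix.trace_smul, smul_eq_mul,
        Matrix.one_mul]
    have key : ∀ X : Matrix (Fin n → Fin 2) (Fin n → Fin 2) ℂ,
        Matrix.trace ((pauliRot P θ₁ * pauliRot Q θ₂) * X)
          = c * Matrix.trace ((pauliRot Q θ₂ * pauliRot P θ₁) * X) := by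
      intro X
      rw [hcomm, Matrix.smul_mul, Matrix.trace_smul, smul_eq_mul]
    have e1 := key P
    rw [hAB, hBA, texp, texp, hP2] at e1
    rw [tP, tQP, tPQP, tQPP] at e1
    have e2 := key Q
    rw [hAB, hBA, texp, texp, hQ2] at e2
    rw [tQ, tPQ, tPQQ, tQPQ] at e2
    have e3 := key (Q * P)
    rw [hAB, hBA, texp, texp] at e3
    rw [hone, hnegone, Matrix.trace_neg] at e3
    rw [tQP, tQQP, tPQP'] at e3
    -- derive c = -1 and cos = 0
    have hc : c = -1 := by
      have h : (1 + c) * (w₁ * w₂ * Matrix.trace (1 : Matrix (Fin n → Fin 2) (Fin n → Fin 2) ℂ)) = 0 := by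
        linear_combination e3
      rcases mul_eq_zero.mp h with h' | h'
      · linear_combination h'
      · exact absurd h' (mul_ne_zero (mul_ne_zero hw₁ hw₂) hT)
    rw [hc] at e1 e2
    have hu₂0 : u₂ = 0 := by
      have h : u₂ * (2 * (w₁ * Matrix.trace (1 : Matrix (Fin n → Fin 2) (Fin n → Fin 2) ℂ))) = 0 := by
        linear_combination e1
      rcases mul_eq_zero.mp h with h' | h'
      · exact h'
      · exact absurd h' (mul_ne_zero two_ne_zero (mul_ne_zero hw₁ hT))
    have hu₁0 : u₁ = 0 := by
      have h : u₁ * (2 * (w₂ * Matrix.trace (1 : Matrix (Fin n → Fin 2) (Fin n → Fin 2) ℂ))) = 0 := by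
        linear_combination e2
      rcases mul_eq_zero.mp h with h' | h'
      · exact h'
      · exact absurd h' (mul_ne_zero two_ne_zero (mul_ne_zero hw₂ hT))
    have hcos : ∀ θ : ℝ, Complex.cos ((θ : ℂ) / 2) = 0 → ∃ k : ℤ, θ = Real.pi + 2 * Real.pi * k := by
      intro θ h
      rw [hcast, ← Complex.ofReal_cos] at h
      have h' : Real.cos (θ / 2) = 0 := by exact_mod_cast h
      obtain ⟨k, hk⟩ := Real.cos_eq_zero_iff.mp h'
      exact ⟨k, by linear_combination (2 : ℝ) * hk⟩
    exact ⟨hcos θ₁ hu₁0, hcos θ₂ hu₂0⟩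
  · rintro (hPQ | ⟨⟨k₁, hk₁⟩, ⟨k₂, hk₂⟩⟩)
    · refine ⟨1, by simp, ?_⟩
      rw [one_smul, hAB, hBA, hPQ]
      module
    · have hcz : ∀ (θ : ℝ) (k : ℤ), θ = Real.pi + 2 * Real.pi * k →
          Complex.cos ((θ : ℂ) / 2) = 0 := by
        intro θ k hk
        rw [hcast, ← Complex.ofReal_cos, Complex.ofReal_eq_zero]
        rw [Real.cos_eq_zero_iff]
        exact ⟨k, by rw [hk]; push_cast; ring⟩
      have hu₁0 : u₁ = 0 := hcz θ₁ k₁ hk₁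
      have hu₂0 : u₂ = 0 := hcz θ₂ k₂ hk₂
      refine ⟨d, by rcases hd1 with rfl | rfl <;> simp, ?_⟩
      rw [hAB, hBA, hu₁0, hu₂0, hdPQ]
      module
end

section
/- Let P₀,…,P_{m−1} be a sequence of Pauli products, let A be the associated commutativity matrix (A_{i,j} = 1 iff Pᵢ anticommutes with Pⱼ, for i < j; A is strictly upper triangular), and let v be the rank vector of A. Let i < j. If Pᵢ commutes with P_k for every k with i < k ≤ j and v_k = 1, then Pᵢ commutes with P_k for every k with i < k ≤ j. -/
open Matrix Finset

/-- The rank of the submatrix formed by the first `k` columns of `A`. -/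
noncomputable def firstColsRank {m : ℕ} (A : Matrix (Fin m) (Fin m) (ZMod 2)) (k : ℕ) : ℕ :=
  (A.submatrix id (fun j : Fin (min k m) => Fin.castLE (min_le_right k m) j)).rank

/-- The rank vector of `A` : `v 0 = 0` and for `i ≥ 1`, `v i = 1` iff appending column `i`
increases the rank of the matrix formed by the first `i` columns. -/
noncomputable def rankVector {m : ℕ} (A : Matrix (Fin m) (Fin m) (ZMod 2)) : Fin m → ZMod 2 :=
  fun i => if i.val = 0 then 0
    else if firstColsRank A i.val < firstColsRank A (i.val + 1) then 1 else 0

lemma firstColsRank_eq_span {m : ℕ} (A : Matrix (Fin m) (Fin m) (ZMod 2)) (k : ℕ) :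
    firstColsRank A k
      = Module.finrank (ZMod 2)
          (Submodule.span (ZMod 2) (Aᵀ '' {ℓ : Fin m | ℓ.val < k})) := by
  unfold firstColsRank
  rw [Matrix.rank_eq_finrank_span_cols]
  have hr : Set.range (A.submatrix id
      (fun j : Fin (min k m) => Fin.castLE (min_le_right k m) j))ᵀ
      = Aᵀ '' {ℓ : Fin m | ℓ.val < k} := by
    ext x
    constructor
    · rintro ⟨ℓ, rfl⟩
      exact ⟨Fin.castLE (min_le_right k m) ℓ,
        lt_of_lt_of_le ℓ.2 (min_le_left k m), rfl⟩
    · rintro ⟨ℓ, hℓ, rfl⟩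
      exact ⟨⟨ℓ.val, lt_min hℓ ℓ.2⟩, rfl⟩
  exact congrArg (fun s => Module.finrank (ZMod 2) (Submodule.span (ZMod 2) s)) hr

theorem stmt10 {n m : ℕ} (P : Fin m → (Fin n → Fin 4))
    (A : Matrix (Fin m) (Fin m) (ZMod 2))
    (hTri : ∀ i j : Fin m, j ≤ i → A i j = 0)
    (hA : ∀ i j : Fin m, i < j →
      (A i j = 1 ↔ pauliTensor (P i) * pauliTensor (P j) ≠ pauliTensor (P j) * pauliTensor (P i)))
    (i j : Fin m) (hij : i < j)
    (hcomm : ∀ k : Fin m, i < k → k ≤ j → rankVector A k = 1 →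
      pauliTensor (P i) * pauliTensor (P k) = pauliTensor (P k) * pauliTensor (P i)) :
    ∀ k : Fin m, i < k → k ≤ j →
      pauliTensor (P i) * pauliTensor (P k) = pauliTensor (P k) * pauliTensor (P i) := by
  suffices main : ∀ N : ℕ, ∀ k : Fin m, k.val < N → i < k → k ≤ j →
      pauliTensor (P i) * pauliTensor (P k) = pauliTensor (P k) * pauliTensor (P i) by
    intro k hik hkj
    exact main (k.val + 1) k (Nat.lt_succ_self _) hik hkj
  intro N
  induction N with
  | zero => intro k hk; omega
  | succ N IHN =>
  intro k hkN hik hkj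
  have IH : ∀ ℓ : Fin m, ℓ < k → i < ℓ → ℓ ≤ j →
      pauliTensor (P i) * pauliTensor (P ℓ) = pauliTensor (P ℓ) * pauliTensor (P i) :=
    fun ℓ hℓk => IHN ℓ (by have : ℓ.val < k.val := hℓk; omega)
  by_cases hv : rankVector A k = 1
  · exact hcomm k hik hkj hv
  · by_contra hne
    have hA1 : A i k = 1 := (hA i k hik).mpr hne
    -- rank does not increase at k
    have hk0 : k.val ≠ 0 := by
      have : i.val < k.val := hik
      omega
    have hnlt : ¬ firstColsRank A k.val < firstColsRank A (k.val + 1) := by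
      intro h
      exact hv (by simp [rankVector, hk0, h])
    -- span equality
    set S : ℕ → Set (Fin m → ZMod 2) := fun c => Aᵀ '' {ℓ : Fin m | ℓ.val < c} with hS
    have hsub : S k.val ⊆ S (k.val + 1) :=
      Set.image_mono (fun ℓ hℓ => by simp only [Set.mem_setOf_eq] at hℓ ⊢; omega)
    have hle : Submodule.span (ZMod 2) (S k.val) ≤ Submodule.span (ZMod 2) (S (k.val + 1)) :=
      Submodule.span_mono hsub
    have hfr : Module.finrank (ZMod 2) (Submodule.span (ZMod 2) (S (k.val + 1)))
        ≤ Module.finrank (ZMod 2) (Submodule.span (ZMod 2) (S k.val)) := by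
      have h1 : firstColsRank A k.val
          = Module.finrank (ZMod 2) (Submodule.span (ZMod 2) (S k.val)) :=
        firstColsRank_eq_span A k.val
      have h2 : firstColsRank A (k.val + 1)
          = Module.finrank (ZMod 2) (Submodule.span (ZMod 2) (S (k.val + 1))) :=
        firstColsRank_eq_span A (k.val + 1)
      omega
    have hspan_eq : Submodule.span (ZMod 2) (S k.val)
        = Submodule.span (ZMod 2) (S (k.val + 1)) :=
      Submodule.eq_of_le_of_finrank_le hle hfr
    -- column k is in the span of earlier columns
    have hmem : Aᵀ k ∈ Submodule.span (ZMod 2) (S k.val) := by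
      rw [hspan_eq]
      exact Submodule.subset_span ⟨k, by simp, rfl⟩
    -- rewrite as span of a range
    have himg : S k.val = Set.range (fun ℓ : {x : Fin m // x.val < k.val} => Aᵀ ℓ.val) := by
      rw [hS]
      ext x
      constructor
      · rintro ⟨ℓ, hℓ, rfl⟩; exact ⟨⟨ℓ, hℓ⟩, rfl⟩
      · rintro ⟨ℓ, rfl⟩; exact ⟨ℓ.val, ℓ.2, rfl⟩
    rw [himg, Finsupp.mem_span_range_iff_exists_finsupp] at hmem
    obtain ⟨c, hc⟩ := hmem
    have hrow := congrFun hc i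
    have hzero : ∀ ℓ : {x : Fin m // x.val < k.val}, A i ℓ.val = 0 := by
      intro ℓ
      rcases le_or_gt (ℓ.val : Fin m) i with h | h
      · exact hTri i ℓ.val h
      · have hℓk : (ℓ.val : Fin m) < k := ℓ.2
        have hℓj : (ℓ.val : Fin m) ≤ j := le_of_lt (lt_of_lt_of_le hℓk hkj)
        have hcommℓ := IH ℓ.val hℓk h hℓj
        have : A i ℓ.val ≠ 1 := fun h1 => ((hA i ℓ.val h).mp h1) hcommℓ
        revert this
        generalize A i ℓ.val = x
        revert x; decide
    have : A i k = 0 := by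
      show Aᵀ k i = 0
      rw [← hrow]
      show (c.sum fun ℓ r => r • Aᵀ ℓ.val) i = 0
      rw [Finsupp.sum]
      rw [Finset.sum_apply]
      apply Finset.sum_eq_zero
      intro ℓ _
      show c ℓ • A i ℓ.val = 0
      rw [hzero ℓ, smul_zero]
    rw [this] at hA1
    exact absurd hA1 (by decide)
end
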